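/- If the generating polynomial of an ℕ-valued statistic X on a uniform finite set is a ratio of products of q-integers ∏[b_k]_q / ∏[a_k]_q, then all odd cumulants of X of order at least 3 vanish: κ^{(2r+1)}(X) = 0 for all r ≥ 1. -/

import Mathlib

/-- The `r`-th cumulant of the statistic `X` on a finite set `𝔗` endowed with the
uniform measure: the `r`-th derivative at `0` of `z ↦ log E[e^{zX}]`. -/
noncomputable def cumulant {𝔗 : Type*} [Fintype 𝔗] (X : 𝔗 → ℕ) (r : ℕ) : ℝ :=
  iteratedDeriv r
    (fun z => Real.log ((∑ T : 𝔗, Real.exp (z * X T)) / (Fintype.card 𝔗 : ℝ))) 0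

private lemma my_iteratedDeriv_const (n : ℕ) (c : ℝ) :
    iteratedDeriv n (fun _ : ℝ => c) = fun x => if n = 0 then c else 0 := by
  induction n with
  | zero => simp [iteratedDeriv_zero]
  | succ m ih =>
    rw [iteratedDeriv_succ, ih]
    funext x
    rcases Nat.eq_zero_or_pos m with h | h <;> simp [h, deriv_const]

private lemma my_iteratedDeriv_linear (n : ℕ) (hn : 2 ≤ n) (c : ℝ) :
    iteratedDeriv n (fun z : ℝ => z * c) 0 = 0 := by
  obtain ⟨m, rfl⟩ : ∃ m, n = m + 1 := ⟨n - 1, by omega⟩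
  rw [iteratedDeriv_succ']
  have : deriv (fun z : ℝ => z * c) = fun _ => c := by
    funext x
    simpa using deriv_mul_const (c := c) (differentiableAt_id') (x := x)
  rw [this, my_iteratedDeriv_const]
  simp [show m ≠ 0 by omega]

private lemma my_iteratedDeriv_add {n : ℕ} {f g : ℝ → ℝ} (x : ℝ)
    (hf : ContDiff ℝ ⊤ f) (hg : ContDiff ℝ ⊤ g) :
    iteratedDeriv n (fun z => f z + g z) x = iteratedDeriv n f x + iteratedDeriv n g x := by
  have hf' : ContDiffOn ℝ n f Set.univ := (hf.of_le le_top).contDiffOn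
  have hg' : ContDiffOn ℝ n g Set.univ := (hg.of_le le_top).contDiffOn
  have := iteratedDerivWithin_add (Set.mem_univ x) uniqueDiffOn_univ
    (f := f) (g := g) (n := n) (hf' x (Set.mem_univ x)) (hg' x (Set.mem_univ x))
  rw [iteratedDerivWithin_univ, iteratedDerivWithin_univ, iteratedDerivWithin_univ] at this
  exact this

/-- If the generating polynomial `P(q) = ∑_T q^{X T}` is a ratio of `q`-integers,
i.e. `P(q) ∏_k (1 - q^{a_k}) = ∏_k (1 - q^{b_k})`, then all odd cumulants of `X`
of order at least `3` vanish: `κ^{(2r+1)}(X) = 0` for all `r ≥ 1`. -/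
theorem odd_cumulants_vanish {𝔗 : Type*} [Fintype 𝔗] [Nonempty 𝔗]
    (X : 𝔗 → ℕ) (l : ℕ) (a b : Fin l → ℕ)
    (ha : ∀ k, 0 < a k) (hb : ∀ k, 0 < b k)
    (hP : ∀ q : ℝ,
      (∑ T : 𝔗, q ^ X T) * ∏ k, (1 - q ^ a k) = ∏ k, (1 - q ^ b k)) :
    ∀ r : ℕ, 1 ≤ r → cumulant X (2 * r + 1) = 0 := by
  classical
  set c : ℝ := (Fintype.card 𝔗 : ℝ) with hc
  have hcpos : 0 < c := by
    have h := Fintype.card_pos (α := 𝔗)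
    rw [hc]
    exact_mod_cast h
  set n : ℝ := (∑ k, (b k : ℝ)) - (∑ k, (a k : ℝ)) with hn
  set M : ℝ → ℝ := fun z => (∑ T : 𝔗, Real.exp (z * X T)) / c with hM
  have hMpos : ∀ z, 0 < M z := by
    intro z
    apply div_pos _ hcpos
    exact Finset.sum_pos (fun T _ => Real.exp_pos _) Finset.univ_nonempty
  -- Key symmetry : M (-z) = exp (-z*n) * M z
  have key : ∀ z : ℝ, M (-z) = Real.exp (-z * n) * M z := by
    intro z
    rcases eq_or_ne z 0 with rfl | hz
    · simp
    set q : ℝ := Real.exp z with hq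
    have hq0 : q ≠ 0 := (Real.exp_pos z).ne'
    have hq1 : q ≠ 1 := by
      simp only [hq, Ne, Real.exp_eq_one_iff]
      exact hz
    have hqpow : ∀ m : ℕ, 0 < m → q ^ m ≠ 1 := by
      intro m hm h1
      have : Real.exp (m * z) = 1 := by rw [Real.exp_nat_mul]; exact h1
      rw [Real.exp_eq_one_iff] at this
      rcases mul_eq_zero.mp this with h | h
      · exact absurd h (by exact_mod_cast hm.ne')
      · exact hz h
    have hA : (∏ k, (1 - q ^ a k)) ≠ 0 := by
      rw [Finset.prod_ne_zero_iff]
      intro k _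
      exact sub_ne_zero.mpr fun h => hqpow (a k) (ha k) h.symm
    -- hP at q and at q⁻¹
    have h1 := hP q
    have h2 := hP q⁻¹
    -- rewrite h2
    have inva : ∀ m : ℕ, (1 - (q⁻¹) ^ m) = (q ^ m - 1) / q ^ m := by
      intro m
      field_simp
      rw [one_div, inv_pow, sub_mul, one_mul, inv_mul_cancel₀ (pow_ne_zero _ hq0)]
    have h2' : (∑ T : 𝔗, (q⁻¹) ^ X T) * ((∏ k, (q ^ a k - 1)) / ∏ k, q ^ a k)
        = (∏ k, (q ^ b k - 1)) / ∏ k, q ^ b k := by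
      rw [← Finset.prod_div_distrib, ← Finset.prod_div_distrib]
      simpa only [inva] using h2
    have hnegA : (∏ k, (q ^ a k - 1)) = (-1 : ℝ) ^ l * ∏ k, (1 - q ^ a k) := by
      calc (∏ k, (q ^ a k - 1)) = ∏ k, ((-1 : ℝ) * (1 - q ^ a k)) :=
            Finset.prod_congr rfl fun k _ => by ring
        _ = (-1 : ℝ) ^ l * ∏ k, (1 - q ^ a k) := by
            rw [Finset.prod_mul_distrib, Finset.prod_const, Finset.card_univ, Fintype.card_fin]
    have hnegB : (∏ k, (q ^ b k - 1)) = (-1 : ℝ) ^ l * ∏ k, (1 - q ^ b k) := by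
      calc (∏ k, (q ^ b k - 1)) = ∏ k, ((-1 : ℝ) * (1 - q ^ b k)) :=
            Finset.prod_congr rfl fun k _ => by ring
        _ = (-1 : ℝ) ^ l * ∏ k, (1 - q ^ b k) := by
            rw [Finset.prod_mul_distrib, Finset.prod_const, Finset.card_univ, Fintype.card_fin]
    have hqa : (∏ k, q ^ a k) ≠ 0 := Finset.prod_ne_zero_iff.mpr fun k _ => pow_ne_zero _ hq0
    have hqb : (∏ k, q ^ b k) ≠ 0 := Finset.prod_ne_zero_iff.mpr fun k _ => pow_ne_zero _ hq0
    have hneg1 : ((-1 : ℝ) ^ l) ≠ 0 := by positivity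
    -- deduce P(q⁻¹) = (∏ q^a / ∏ q^b) * P(q)
    have hPinv : (∑ T : 𝔗, (q⁻¹) ^ X T)
        = ((∏ k, q ^ a k) / ∏ k, q ^ b k) * (∑ T : 𝔗, q ^ X T) := by
      rw [← mul_div_assoc] at h2'
      have h4 := (div_eq_div_iff hqa hqb).mp h2'
      rw [hnegA, hnegB, ← h1] at h4
      have h5 : (∑ T : 𝔗, (q⁻¹) ^ X T) * (∏ k, (1 - q ^ a k)) * (∏ k, q ^ b k)
          = ((∑ T : 𝔗, q ^ X T) * ∏ k, (1 - q ^ a k)) * (∏ k, q ^ a k) :=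
        mul_left_cancel₀ hneg1 (by linear_combination h4)
      have h6 : (∑ T : 𝔗, (q⁻¹) ^ X T) * (∏ k, q ^ b k)
          = (∑ T : 𝔗, q ^ X T) * (∏ k, q ^ a k) :=
        mul_left_cancel₀ hA (by linear_combination h5)
      rw [div_mul_eq_mul_div, eq_div_iff hqb]
      linear_combination h6
    -- translate back to exponentials
    have e1 : (∑ T : 𝔗, (q⁻¹) ^ X T) = ∑ T : 𝔗, Real.exp (-z * X T) := by
      refine Finset.sum_congr rfl fun T _ => ?_
      rw [← Real.exp_neg, ← Real.exp_nat_mul]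
      ring_nf
    have e2 : (∑ T : 𝔗, q ^ X T) = ∑ T : 𝔗, Real.exp (z * X T) := by
      refine Finset.sum_congr rfl fun T _ => ?_
      rw [← Real.exp_nat_mul]; ring_nf
    have e3 : ((∏ k, q ^ a k) / ∏ k, q ^ b k) = Real.exp (-z * n) := by
      have pa : (∏ k, q ^ a k) = Real.exp (z * ∑ k, (a k : ℝ)) := by
        rw [Finset.mul_sum, Real.exp_sum]
        refine Finset.prod_congr rfl fun k _ => ?_
        rw [← Real.exp_nat_mul]; ring_nf
      have pb : (∏ k, q ^ b k) = Real.exp (z * ∑ k, (b k : ℝ)) := by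
        rw [Finset.mul_sum, Real.exp_sum]
        refine Finset.prod_congr rfl fun k _ => ?_
        rw [← Real.exp_nat_mul]; ring_nf
      rw [pa, pb, ← Real.exp_sub]
      congr 1
      rw [hn]; ring
    rw [e1, e2, e3] at hPinv
    show (∑ T : 𝔗, Real.exp (-z * ↑(X T))) / c
        = Real.exp (-z * n) * ((∑ T : 𝔗, Real.exp (z * ↑(X T))) / c)
    rw [hPinv]; ring
  -- f := log ∘ M
  set f : ℝ → ℝ := fun z => Real.log (M z) with hf
  have hfsym : ∀ z, f (-z) = -z * n + f z := by
    intro z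
    rw [hf]
    simp only
    rw [key z, Real.log_mul (Real.exp_ne_zero _) (hMpos z).ne', Real.log_exp]
  -- smoothness
  have hMcd : ContDiff ℝ ⊤ M := by
    apply ContDiff.div_const
    apply ContDiff.sum
    intro T _
    exact (contDiff_id.mul contDiff_const).exp
  have hfcd : ContDiff ℝ ⊤ f := hMcd.log fun z => (hMpos z).ne'
  -- the linear-shift identity: f z = f (-z) + z * n
  have hfid : f = fun z => f (-z) + z * n := by
    funext z
    rw [hfsym z]; ring
  intro r hr
  set m : ℕ := 2 * r + 1 with hm
  have hmodd : Odd m := ⟨r, by omega⟩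
  have hm2 : 2 ≤ m := by omega
  have hcum : cumulant X m = iteratedDeriv m f 0 := rfl
  have step : iteratedDeriv m f 0
      = iteratedDeriv m (fun z => f (-z)) 0 + iteratedDeriv m (fun z => z * n) 0 := by
    conv_lhs => rw [hfid]
    exact my_iteratedDeriv_add 0 (hfcd.comp contDiff_neg)
      (contDiff_id.mul contDiff_const)
  rw [iteratedDeriv_comp_neg, my_iteratedDeriv_linear m hm2, neg_zero] at step
  rw [hmodd.neg_one_pow] at step
  simp only [neg_smul, one_smul, add_zero] at step
  rw [hcum]
  linarith [step]
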